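/- Let ρ ∈ ℂ[[t]] be a formal power series with zero constant coefficient and nonzero coefficient of t, regarded as a nonzero element of the field of formal Laurent series ℂ((t)). For a Laurent polynomial h = ∑_n h_n tⁿ ∈ ℂ[t, t⁻¹], set h(ρ) := ∑_n h_n ρⁿ ∈ ℂ((t)), where ρⁿ for n ∈ ℤ is the integer power in the field ℂ((t)). Then Res(h(ρ)·ρ′) = Res(h), where ρ′ denotes the formal derivative of ρ and Res denotes the coefficient of t⁻¹. In particular, the Heisenberg cocycle (f,g) ↦ Res(f·dg) is independent of the choice of formal coordinate: Res(f(ρ)·(g(ρ))′) = Res(f·g′) for all Laurent polynomials f, g. -/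

import Mathlib

/-- The operator multiplying the `n`-th coefficient of a Laurent series by `n`. -/
noncomputable def indexScale (x : LaurentSeries ℂ) : LaurentSeries ℂ :=
  ⟨fun n => (n : ℂ) * x.coeff n,
    x.isPWO_support'.mono (by
      intro n hn
      simp only [Function.mem_support] at hn ⊢
      exact fun h => hn (by rw [h, mul_zero]))⟩

/-- The formal derivative of a Laurent series: `(∑ aₙ tⁿ)' = ∑ n aₙ t^{n-1}`. -/
noncomputable def laurentDeriv (x : LaurentSeries ℂ) : LaurentSeries ℂ :=
  (HahnSeries.single (-1 : ℤ) (1 : ℂ)) * indexScale x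

/-- The residue of a Laurent series: its coefficient of `t⁻¹`. -/
def laurentRes (x : LaurentSeries ℂ) : ℂ := x.coeff (-1)

/-- Evaluation of a Laurent polynomial `h = ∑ hₙ tⁿ` (given by its finitely supported
coefficient function) at a nonzero element `x` of the field `ℂ((t))`:
`h(x) = ∑ hₙ xⁿ`, where `xⁿ` is the integer power in the field of Laurent series. -/
noncomputable def lpEval (h : ℤ →₀ ℂ) (x : LaurentSeries ℂ) : LaurentSeries ℂ :=
  h.sum fun n a => a • x ^ n

open HahnSeries

@[simp] lemma indexScale_coeff (x : LaurentSeries ℂ) (n : ℤ) :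
    (indexScale x).coeff n = (n : ℂ) * x.coeff n := rfl

lemma laurentDeriv_coeff (x : LaurentSeries ℂ) (n : ℤ) :
    (laurentDeriv x).coeff n = ((n + 1 : ℤ) : ℂ) * x.coeff (n + 1) := by
  have h := HahnSeries.coeff_single_mul_add (r := (1 : ℂ)) (x := indexScale x)
    (a := n + 1) (b := (-1 : ℤ))
  simp only [add_neg_cancel_right, one_mul, indexScale_coeff] at h
  simpa [laurentDeriv] using h

lemma indexScale_support (x : LaurentSeries ℂ) : (indexScale x).support ⊆ x.support := by
  intro n hn
  simp only [HahnSeries.mem_support, indexScale_coeff] at hn ⊢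
  exact fun h => hn (by rw [h, mul_zero])

lemma indexScale_mul (x y : LaurentSeries ℂ) :
    indexScale (x * y) = indexScale x * y + x * indexScale y := by
  ext n
  rw [HahnSeries.coeff_add, indexScale_coeff, HahnSeries.coeff_mul,
    HahnSeries.coeff_mul_left' x.isPWO_support (indexScale_support x),
    HahnSeries.coeff_mul_right' y.isPWO_support (indexScale_support y),
    Finset.mul_sum, ← Finset.sum_add_distrib]
  refine Finset.sum_congr rfl fun ij hij => ?_
  obtain ⟨-, -, hsum⟩ := (Finset.mem_addAntidiagonal).mp hij
  rw [indexScale_coeff, indexScale_coeff, ← hsum]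
  push_cast
  ring

lemma laurentDeriv_mul (x y : LaurentSeries ℂ) :
    laurentDeriv (x * y) = laurentDeriv x * y + x * laurentDeriv y := by
  unfold laurentDeriv
  rw [indexScale_mul, mul_add]
  ring

lemma laurentDeriv_one : laurentDeriv (1 : LaurentSeries ℂ) = 0 := by
  ext n
  rw [laurentDeriv_coeff]
  rcases eq_or_ne n (-1) with rfl | hn
  · simp
  · rw [HahnSeries.coeff_one, if_neg (by omega), mul_zero, HahnSeries.coeff_zero]

lemma laurentDeriv_add (x y : LaurentSeries ℂ) :
    laurentDeriv (x + y) = laurentDeriv x + laurentDeriv y := by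
  ext n
  simp [laurentDeriv_coeff, HahnSeries.coeff_add, mul_add]

lemma laurentDeriv_smul (c : ℂ) (x : LaurentSeries ℂ) :
    laurentDeriv (c • x) = c • laurentDeriv x := by
  ext n
  simp [laurentDeriv_coeff, HahnSeries.coeff_smul]
  ring

lemma laurentRes_deriv (x : LaurentSeries ℂ) : laurentRes (laurentDeriv x) = 0 := by
  simp [laurentRes, laurentDeriv_coeff]

lemma laurentDeriv_pow_nat (x : LaurentSeries ℂ) (k : ℕ) :
    laurentDeriv (x ^ k) * x = HahnSeries.C (k : ℂ) * x ^ k * laurentDeriv x := by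
  induction k with
  | zero => simp [laurentDeriv_one]
  | succ k ih =>
      rw [pow_succ, laurentDeriv_mul]
      push_cast
      rw [map_add, map_one]
      linear_combination x * ih

lemma laurentDeriv_zpow (x : LaurentSeries ℂ) (hx : x ≠ 0) (n : ℤ) :
    laurentDeriv (x ^ n) * x = HahnSeries.C (n : ℂ) * x ^ n * laurentDeriv x := by
  rcases n with k | k
  · rw [Int.ofNat_eq_coe, zpow_natCast]
    simpa using laurentDeriv_pow_nat x k
  · set y := x ^ (k + 1) with hy_def
    have hy : y ≠ 0 := pow_ne_zero _ hx
    set z := y⁻¹ with hz_def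
    have hinv : x ^ (Int.negSucc k) = z := zpow_negSucc x k
    have hone : y * z = 1 := mul_inv_cancel₀ hy
    have hD := congrArg laurentDeriv hone
    rw [laurentDeriv_mul, laurentDeriv_one] at hD
    have hxinv : z * y = 1 := inv_mul_cancel₀ hy
    have hk := laurentDeriv_pow_nat x (k + 1)
    rw [← hy_def] at hk
    clear_value z
    clear_value y
    have key : laurentDeriv z * x * y
        = -((HahnSeries.C (k : ℂ) + 1) * z * laurentDeriv x) * y := by
      push_cast at hk
      rw [map_add, map_one] at hk
      linear_combination x * hD - z * hk
    have hfin := mul_right_cancel₀ hy key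
    have hc : ((Int.negSucc k : ℤ) : ℂ) = -((k : ℂ) + 1) := by
      rw [Int.negSucc_eq]; push_cast; ring
    rw [hinv, hc, map_neg, map_add, map_one]
    linear_combination hfin

lemma laurentRes_C_mul (c : ℂ) (y : LaurentSeries ℂ) :
    laurentRes (HahnSeries.C c * y) = c * laurentRes y := by
  simp [laurentRes, HahnSeries.C_apply, HahnSeries.coeff_single_zero_mul]

lemma laurentRes_zpow_mul_deriv_ne (x : LaurentSeries ℂ) (hx : x ≠ 0) (n : ℤ) (hn : n ≠ -1) :
    laurentRes (x ^ n * laurentDeriv x) = 0 := by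
  have h := laurentDeriv_zpow x hx (n + 1)
  rw [zpow_add_one₀ hx] at h
  have h2 : laurentDeriv (x ^ n * x) = HahnSeries.C ((n : ℂ) + 1) * (x ^ n * laurentDeriv x) := by
    apply mul_right_cancel₀ hx
    push_cast at h
    linear_combination h
  have h3 := laurentRes_deriv (x ^ n * x)
  rw [h2, laurentRes_C_mul] at h3
  have hne : ((n : ℂ) + 1) ≠ 0 := by
    intro hc
    apply hn
    have h4 : ((n + 1 : ℤ) : ℂ) = ((0 : ℤ) : ℂ) := by push_cast; rw [hc]
    have := Int.cast_injective (α := ℂ) h4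
    omega
  exact (mul_eq_zero.mp h3).resolve_left hne

lemma coeff_mul_neg_of_nonneg_support (a b : LaurentSeries ℂ)
    (ha : ∀ n < (0 : ℤ), a.coeff n = 0) (hb : ∀ n < (0 : ℤ), b.coeff n = 0)
    {n : ℤ} (hn : n < 0) : (a * b).coeff n = 0 := by
  rw [HahnSeries.coeff_mul]
  apply Finset.sum_eq_zero
  intro ij hij
  obtain ⟨h1, h2, h3⟩ := Finset.mem_addAntidiagonal.mp hij
  exfalso
  rcases lt_or_ge ij.1 0 with h | h
  · exact h1 (ha _ h)
  rcases lt_or_ge ij.2 0 with h' | h'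
  · exact h2 (hb _ h')
  omega

lemma laurentRes_add (a b : LaurentSeries ℂ) :
    laurentRes (a + b) = laurentRes a + laurentRes b := by
  simp [laurentRes, HahnSeries.coeff_add]

lemma laurentRes_inv_mul_deriv (x : LaurentSeries ℂ)
    (h1 : x.coeff 1 ≠ 0) (hlt : ∀ n < (1 : ℤ), x.coeff n = 0) :
    laurentRes (x⁻¹ * laurentDeriv x) = 1 := by
  have hx : x ≠ 0 := fun h => h1 (by rw [h, HahnSeries.coeff_zero])
  set c := x.coeff 1 with hc
  set w : LaurentSeries ℂ := HahnSeries.single (-1 : ℤ) c⁻¹ * x - 1 with hw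
  have hsm : ∀ n : ℤ, (HahnSeries.single (-1 : ℤ) c⁻¹ * x).coeff n = c⁻¹ * x.coeff (n + 1) := by
    intro n
    have := HahnSeries.coeff_single_mul_add (r := c⁻¹) (x := x) (a := n + 1) (b := (-1 : ℤ))
    simpa using this
  have hwc : ∀ n ≤ (0 : ℤ), w.coeff n = 0 := by
    intro n hn
    rcases eq_or_ne n 0 with rfl | hne
    · rw [hw]; simp [HahnSeries.coeff_sub, hsm, ← hc, inv_mul_cancel₀ h1]
    · rw [hw]
      have hz : x.coeff (n + 1) = 0 := hlt _ (by omega)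
      simp [HahnSeries.coeff_sub, hsm, hz, HahnSeries.coeff_one, if_neg hne]
  set u : LaurentSeries ℂ := 1 + w with hu_def
  have huc : ∀ n < (0 : ℤ), u.coeff n = 0 := by
    intro n hn
    rw [hu_def, HahnSeries.coeff_add, HahnSeries.coeff_one, if_neg (by omega), hwc n (le_of_lt hn),
      add_zero]
  have hu0 : u.coeff 0 = 1 := by
    rw [hu_def, HahnSeries.coeff_add, HahnSeries.coeff_one, if_pos rfl, hwc 0 le_rfl, add_zero]
  have hu : u ≠ 0 := fun h => by simp [h] at hu0
  have hcc' : HahnSeries.single (-1 : ℤ) c⁻¹ * HahnSeries.single (1 : ℤ) c = 1 := by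
    rw [HahnSeries.single_mul_single, inv_mul_cancel₀ h1]
    norm_num [HahnSeries.single_zero_one]
  have hcc : HahnSeries.single (1 : ℤ) c * HahnSeries.single (-1 : ℤ) c⁻¹ = 1 := by
    rw [mul_comm]; exact hcc'
  have hxeq : x = HahnSeries.single (1 : ℤ) c * u := by
    have : HahnSeries.single (1 : ℤ) c * u
        = (HahnSeries.single (1 : ℤ) c * HahnSeries.single (-1 : ℤ) c⁻¹) * x := by
      rw [hu_def, hw]; ring
    rw [this, hcc, one_mul]
  have hds : laurentDeriv (HahnSeries.single (1 : ℤ) c) = HahnSeries.single (0 : ℤ) c := by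
    ext n
    rw [laurentDeriv_coeff]
    rcases eq_or_ne n 0 with rfl | hne
    · simp [HahnSeries.coeff_single_same]
    · rw [HahnSeries.coeff_single_of_ne (by omega), HahnSeries.coeff_single_of_ne hne, mul_zero]
  have hDx : laurentDeriv x = HahnSeries.single (0 : ℤ) c * u
      + HahnSeries.single (1 : ℤ) c * laurentDeriv w := by
    rw [hxeq] at *
    rw [laurentDeriv_mul, hds, hu_def, laurentDeriv_add, laurentDeriv_one, zero_add]
  have hxinv : x⁻¹ = u⁻¹ * HahnSeries.single (-1 : ℤ) c⁻¹ := by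
    rw [hxeq, mul_inv, inv_eq_of_mul_eq_one_left hcc']
    ring
  have hinvu : u⁻¹ * u = 1 := inv_mul_cancel₀ hu
  have e1 : HahnSeries.single (-1 : ℤ) c⁻¹ * HahnSeries.single (0 : ℤ) c
      = HahnSeries.single (-1 : ℤ) (1 : ℂ) := by
    rw [HahnSeries.single_mul_single, inv_mul_cancel₀ h1, add_zero]
  have main : x⁻¹ * laurentDeriv x
      = HahnSeries.single (-1 : ℤ) (1 : ℂ) + u⁻¹ * laurentDeriv w := by
    rw [hxinv, hDx]
    linear_combination (u⁻¹ * u) * e1 + (u⁻¹ * laurentDeriv w) * hcc'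
      + (HahnSeries.single (-1 : ℤ) (1 : ℂ)) * hinvu
  rw [main, laurentRes_add]
  have hres1 : laurentRes (HahnSeries.single (-1 : ℤ) (1 : ℂ)) = 1 := by
    simp [laurentRes, HahnSeries.coeff_single_same]
  have huinv : ∀ n < (0 : ℤ), (u⁻¹).coeff n = 0 := by
    have hou : u.order = 0 := by
      apply le_antisymm
      · exact HahnSeries.order_le_of_coeff_ne_zero (by rw [hu0]; exact one_ne_zero)
      · by_contra hlt'
        push_neg at hlt'
        exact (HahnSeries.coeff_order_eq_zero.not.2 hu) (huc _ hlt')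
    have huinvne : u⁻¹ ≠ 0 := inv_ne_zero hu
    have horder : (u⁻¹).order = 0 := by
      have := HahnSeries.order_mul (x := u⁻¹) (y := u) huinvne hu
      rw [hinvu, HahnSeries.order_one, hou, add_zero] at this
      omega
    intro n hn
    exact HahnSeries.coeff_eq_zero_of_lt_order (by rw [horder]; exact hn)
  have hDw : ∀ n < (0 : ℤ), (laurentDeriv w).coeff n = 0 := by
    intro n hn
    rw [laurentDeriv_coeff]
    rcases eq_or_ne n (-1) with rfl | hne
    · norm_num
    · rw [hwc (n + 1) (by omega), mul_zero]
  have hres2 : laurentRes (u⁻¹ * laurentDeriv w) = 0 :=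
    coeff_mul_neg_of_nonneg_support _ _ huinv hDw (by norm_num)
  rw [hres1, hres2, add_zero]

lemma laurentRes_smul (a : ℂ) (y : LaurentSeries ℂ) :
    laurentRes (a • y) = a * laurentRes y := by
  simp [laurentRes, HahnSeries.coeff_smul]

lemma smul_eq_C_mul (a : ℂ) (y : LaurentSeries ℂ) : a • y = HahnSeries.C a * y := by
  rw [HahnSeries.C_apply, HahnSeries.single_zero_mul_eq_smul]

lemma laurentDeriv_zero : laurentDeriv (0 : LaurentSeries ℂ) = 0 := by
  ext n; simp [laurentDeriv_coeff]

/-- `laurentRes` as an additive monoid hom. -/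
noncomputable def resHom : LaurentSeries ℂ →+ ℂ where
  toFun := laurentRes
  map_zero' := by simp [laurentRes]
  map_add' := laurentRes_add

/-- `laurentDeriv` as an additive monoid hom. -/
noncomputable def derivHom : LaurentSeries ℂ →+ LaurentSeries ℂ where
  toFun := laurentDeriv
  map_zero' := laurentDeriv_zero
  map_add' := laurentDeriv_add

lemma laurentRes_zpow_mul_deriv (x : LaurentSeries ℂ)
    (h1 : x.coeff 1 ≠ 0) (hlt : ∀ n < (1 : ℤ), x.coeff n = 0) (n : ℤ) :
    laurentRes (x ^ n * laurentDeriv x) = if n = -1 then 1 else 0 := by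
  have hx : x ≠ 0 := fun h => h1 (by rw [h, HahnSeries.coeff_zero])
  rcases eq_or_ne n (-1) with rfl | hne
  · rw [if_pos rfl, zpow_neg_one]
    exact laurentRes_inv_mul_deriv x h1 hlt
  · rw [if_neg hne]
    exact laurentRes_zpow_mul_deriv_ne x hx n hne

lemma res_lpEval_mul_deriv (x : LaurentSeries ℂ)
    (h1 : x.coeff 1 ≠ 0) (hlt : ∀ n < (1 : ℤ), x.coeff n = 0) (h : ℤ →₀ ℂ) :
    laurentRes (lpEval h x * laurentDeriv x) = h (-1) := by
  rw [lpEval, Finsupp.sum_mul]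
  have : laurentRes (h.sum fun n a => (a • x ^ n) * laurentDeriv x)
      = h.sum fun n a => laurentRes ((a • x ^ n) * laurentDeriv x) :=
    map_finsuppSum resHom h _
  rw [this]
  have hterm : ∀ (n : ℤ) (a : ℂ), laurentRes ((a • x ^ n) * laurentDeriv x)
      = if n = -1 then a else 0 := by
    intro n a
    rw [smul_eq_C_mul, mul_assoc, laurentRes_C_mul, laurentRes_zpow_mul_deriv x h1 hlt]
    split_ifs <;> simp
  have h2 : (h.sum fun n a => laurentRes ((a • x ^ n) * laurentDeriv x))
      = h.sum fun n a => if n = -1 then a else 0 :=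
    Finset.sum_congr rfl fun n _ => hterm n (h n)
  rw [h2, Finsupp.sum_ite_self_eq' h (-1)]

lemma res_mn (x : LaurentSeries ℂ)
    (h1 : x.coeff 1 ≠ 0) (hlt : ∀ n < (1 : ℤ), x.coeff n = 0) (m n : ℤ) :
    laurentRes (x ^ m * laurentDeriv (x ^ n))
      = (n : ℂ) * (if m + n = 0 then 1 else 0) := by
  have hx : x ≠ 0 := fun h => h1 (by rw [h, HahnSeries.coeff_zero])
  have h := laurentDeriv_zpow x hx n
  have hsplit : x ^ m * x ^ n = x ^ (m + n - 1) * x := by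
    rw [← zpow_add₀ hx, ← zpow_add_one₀ hx]
    congr 1
    ring
  have key : x ^ m * laurentDeriv (x ^ n) * x
      = (HahnSeries.C (n : ℂ) * (x ^ (m + n - 1) * laurentDeriv x)) * x := by
    calc x ^ m * laurentDeriv (x ^ n) * x = x ^ m * (laurentDeriv (x ^ n) * x) := by ring
      _ = x ^ m * (HahnSeries.C (n : ℂ) * x ^ n * laurentDeriv x) := by rw [h]
      _ = HahnSeries.C (n : ℂ) * ((x ^ m * x ^ n) * laurentDeriv x) := by ring
      _ = _ := by rw [hsplit]; ring
  have key2 := mul_right_cancel₀ hx key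
  rw [key2, laurentRes_C_mul, laurentRes_zpow_mul_deriv x h1 hlt]
  have hiff : (m + n - 1 = -1) ↔ (m + n = 0) := by omega
  rw [if_congr hiff rfl rfl]

lemma res_part2 (x : LaurentSeries ℂ)
    (h1 : x.coeff 1 ≠ 0) (hlt : ∀ n < (1 : ℤ), x.coeff n = 0) (f g : ℤ →₀ ℂ) :
    laurentRes (lpEval f x * laurentDeriv (lpEval g x))
      = f.sum fun m a => g.sum fun n b => a * b * (n : ℂ) * (if m + n = 0 then 1 else 0) := by
  have hderiv : laurentDeriv (lpEval g x) = g.sum fun n b => b • laurentDeriv (x ^ n) := by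
    rw [lpEval]
    rw [show laurentDeriv (g.sum fun n b => b • x ^ n)
        = g.sum fun n b => laurentDeriv (b • x ^ n) from map_finsuppSum derivHom g _]
    exact Finsupp.sum_congr fun n _ => laurentDeriv_smul _ _
  rw [lpEval, hderiv, Finsupp.sum_mul]
  rw [show laurentRes (f.sum fun m a => (a • x ^ m) * g.sum fun n b => b • laurentDeriv (x ^ n))
      = f.sum fun m a => laurentRes ((a • x ^ m) * g.sum fun n b => b • laurentDeriv (x ^ n))
      from map_finsuppSum resHom f _]
  refine Finsupp.sum_congr fun m _ => ?_
  rw [Finsupp.mul_sum]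
  rw [show laurentRes (g.sum fun n b => (f m • x ^ m) * (b • laurentDeriv (x ^ n)))
      = g.sum fun n b => laurentRes ((f m • x ^ m) * (b • laurentDeriv (x ^ n)))
      from map_finsuppSum resHom g _]
  refine Finsupp.sum_congr fun n _ => ?_
  rw [smul_eq_C_mul, smul_eq_C_mul]
  rw [show (HahnSeries.C (f m) * x ^ m) * (HahnSeries.C (g n) * laurentDeriv (x ^ n))
      = HahnSeries.C (f m) * (HahnSeries.C (g n) * (x ^ m * laurentDeriv (x ^ n))) by ring]
  rw [laurentRes_C_mul, laurentRes_C_mul, res_mn x h1 hlt m n]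
  ring

/-- Residue is invariant under formal change of coordinate: if `ρ ∈ ℂ[[t]]` has zero
constant coefficient and nonzero coefficient of `t`, then for any Laurent polynomial `h`,
`Res(h(ρ)·ρ') = Res(h)`; in particular the Heisenberg cocycle `(f,g) ↦ Res(f·dg)` is
coordinate-independent: `Res(f(ρ)·(g(ρ))') = Res(f·g')` (here `t` is embedded into
`ℂ((t))` as `HahnSeries.single 1 1`, so `lpEval h (single 1 1)` is `h` itself). -/
theorem residue_coordinate_independent (ρ : PowerSeries ℂ)
    (h0 : PowerSeries.constantCoeff ρ = 0) (h1 : PowerSeries.coeff 1 ρ ≠ 0) :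
    (∀ h : ℤ →₀ ℂ,
      laurentRes (lpEval h (ρ : LaurentSeries ℂ) * laurentDeriv (ρ : LaurentSeries ℂ)) =
        h (-1)) ∧
    (∀ f g : ℤ →₀ ℂ,
      laurentRes (lpEval f (ρ : LaurentSeries ℂ) *
          laurentDeriv (lpEval g (ρ : LaurentSeries ℂ))) =
        laurentRes (lpEval f (HahnSeries.single (1 : ℤ) (1 : ℂ)) *
          laurentDeriv (lpEval g (HahnSeries.single (1 : ℤ) (1 : ℂ))))) := by
  have hx1 : ((ρ : LaurentSeries ℂ)).coeff 1 ≠ 0 := by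
    rw [PowerSeries.coeff_coe]
    simpa using h1
  have hxlt : ∀ n < (1 : ℤ), ((ρ : LaurentSeries ℂ)).coeff n = 0 := by
    intro n hn
    rw [PowerSeries.coeff_coe]
    split_ifs with hneg
    · rfl
    · have hn0 : n = 0 := by omega
      subst hn0
      simpa [PowerSeries.coeff_zero_eq_constantCoeff] using h0
  have hs1 : (HahnSeries.single (1 : ℤ) (1 : ℂ)).coeff 1 ≠ 0 := by
    rw [HahnSeries.coeff_single_same]
    exact one_ne_zero
  have hslt : ∀ n < (1 : ℤ), (HahnSeries.single (1 : ℤ) (1 : ℂ)).coeff n = 0 := by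
    intro n hn
    exact HahnSeries.coeff_single_of_ne (by omega)
  constructor
  · intro h
    exact res_lpEval_mul_deriv _ hx1 hxlt h
  · intro f g
    rw [res_part2 _ hx1 hxlt, res_part2 _ hs1 hslt]
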